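/- Let J be a graph with chromatic number χ(J) ≥ 2 and let m ≥ χ(J). Then there exists a graph G such that J is an induced subgraph of G, dim_l(G) = m, and G has a local metric basis B with B ∩ V(J) = ∅. -/

import Mathlib

open SimpleGraph

/-- `S` is a local metric set for `G`: every pair of adjacent vertices is
distinguished (by distance) by some vertex of `S`. -/
def IsLocalMetricSet {V : Type*} (G : SimpleGraph V) (S : Set V) : Prop :=
  ∀ u v : V, G.Adj u v → ∃ s ∈ S, G.dist s u ≠ G.dist s v

/-- The local metric dimension of `G`: the minimum cardinality of a local metric set. -/
noncomputable def localMetricDim {V : Type*} (G : SimpleGraph V) : ℕ :=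
  sInf {n | ∃ S : Set V, S.ncard = n ∧ IsLocalMetricSet G S}

section Helpers

variable {V : Type*} {G : SimpleGraph V} {u v : V}

lemma dist_ne_one_of_not_adj (h : ¬ G.Adj u v) : G.dist u v ≠ 1 := by
  intro h1
  exact h (SimpleGraph.dist_eq_one_iff_adj.mp h1)

lemma dist_eq_two_of (hne : u ≠ v) (hna : ¬ G.Adj u v) {w : V}
    (h1 : G.Adj u w) (h2 : G.Adj w v) : G.dist u v = 2 := by
  have hle : G.dist u v ≤ 2 := by
    have := SimpleGraph.dist_le (SimpleGraph.Walk.cons h1 (SimpleGraph.Walk.cons h2 SimpleGraph.Walk.nil))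
    simpa using this
  have h0 : G.dist u v ≠ 0 :=
    SimpleGraph.dist_ne_zero_iff_ne_and_reachable.mpr
      ⟨hne, ⟨(SimpleGraph.Walk.cons h1 (SimpleGraph.Walk.cons h2 SimpleGraph.Walk.nil))⟩⟩
  have h1' : G.dist u v ≠ 1 := dist_ne_one_of_not_adj hna
  omega

lemma dist_ne_two_of (h : ∀ w : V, G.Adj u w → ¬ G.Adj w v) : G.dist u v ≠ 2 := by
  intro h2
  have h0 : G.dist u v ≠ 0 := by omega
  obtain ⟨p, hp⟩ := SimpleGraph.exists_walk_of_dist_ne_zero h0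
  rw [h2] at hp
  cases p with
  | nil => simp at hp
  | cons ha q =>
    cases q with
    | nil => simp at hp
    | cons hb r =>
      simp [SimpleGraph.Walk.length_cons] at hp
      have := hp.eq
      subst this
      exact h _ ha hb

/-- If `a` and `b` are adjacent true twins, walks to `a` can be rerouted to `b`. -/
lemma twin_dist_le {a b s : V} (hab : G.Adj a b)
    (htwin : ∀ x, x ≠ a → x ≠ b → (G.Adj x a ↔ G.Adj x b))
    (hsa : s ≠ a) (hsb : s ≠ b) : G.dist s a ≤ G.dist s b := by
  by_cases hr : G.Reachable s b
  · obtain ⟨p, hp⟩ := hr.exists_walk_length_eq_dist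
    -- look at the walk from the `b` end
    cases hq' : p.reverse with
    | nil =>
      exfalso
      have h0 : p.length = 0 := by
        have := congrArg SimpleGraph.Walk.length hq'
        simpa using this
      exact hsb (SimpleGraph.Walk.eq_of_length_eq_zero h0)
    | @cons _ x _ hbx q =>
      have hlen : q.length + 1 = p.length := by
        have := congrArg SimpleGraph.Walk.length hq'
        simpa [SimpleGraph.Walk.length_reverse] using this.symm
      by_cases hxa : x = a
      · calc G.dist s a ≤ q.reverse.length := by
              rw [← hxa]; exact SimpleGraph.dist_le q.reverse
          _ ≤ p.length := by rw [SimpleGraph.Walk.length_reverse]; omega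
          _ = G.dist s b := hp
      · have hxb : x ≠ b := hbx.ne'
        have hxadja : G.Adj x a := (htwin x hxa hxb).mpr hbx.symm
        have : G.dist s a ≤ (SimpleGraph.Walk.cons hxadja.symm q).reverse.length :=
          SimpleGraph.dist_le _
        calc G.dist s a ≤ (SimpleGraph.Walk.cons hxadja.symm q).reverse.length := this
          _ = q.length + 1 := by simp [SimpleGraph.Walk.length_reverse]
          _ = p.length := hlen
          _ = G.dist s b := hp
  · have hra : ¬ G.Reachable s a := fun h => hr (h.trans ⟨hab.toWalk⟩)
    have h1 : G.dist s a = 0 := SimpleGraph.dist_eq_zero_of_not_reachable hra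
    simp [h1]

lemma twin_dist_eq {a b s : V} (hab : G.Adj a b)
    (htwin : ∀ x, x ≠ a → x ≠ b → (G.Adj x a ↔ G.Adj x b))
    (hsa : s ≠ a) (hsb : s ≠ b) : G.dist s a = G.dist s b := by
  refine le_antisymm (twin_dist_le hab htwin hsa hsb) ?_
  exact twin_dist_le hab.symm (fun x hxb hxa => (htwin x hxa hxb).symm) hsb hsa

end Helpers

section Construction

variable {VJ : Type} (m : ℕ) (J : SimpleGraph VJ) (col : VJ → Fin m)

/-- The auxiliary graph: `J` together with, for each `i : Fin m`, a triangle
`aᵢ = (i,0)`, `bᵢ = (i,1)`, `cᵢ = (i,2)`; `cᵢ` is joined to all vertices of `J`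
whose color is not `i`, and to all other `c_j`'s. -/
def auxGraph : SimpleGraph (VJ ⊕ (Fin m × Fin 3)) where
  Adj x y :=
    match x, y with
    | .inl u, .inl v => J.Adj u v
    | .inl v, .inr p => p.2 = 2 ∧ col v ≠ p.1
    | .inr p, .inl v => p.2 = 2 ∧ col v ≠ p.1
    | .inr p, .inr q => (p.1 = q.1 ∧ p.2 ≠ q.2) ∨ (p.1 ≠ q.1 ∧ p.2 = 2 ∧ q.2 = 2)
  symm := by
    constructor
    rintro (u | ⟨i, k⟩) (v | ⟨j, l⟩) h
    · exact h.symm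
    · exact h
    · exact h
    · rcases h with ⟨h1, h2⟩ | ⟨h1, h2, h3⟩
      · exact Or.inl ⟨h1.symm, h2.symm⟩
      · exact Or.inr ⟨fun hh => h1 hh.symm, h3, h2⟩
  loopless := by
    constructor
    rintro (u | ⟨i, k⟩) h
    · exact J.loopless.irrefl u h
    · rcases h with ⟨_, h2⟩ | ⟨h1, _⟩
      · exact h2 rfl
      · exact h1 rfl

variable {m J col}

lemma auxGraph_adj_inl_inl {u v : VJ} :
    (auxGraph m J col).Adj (.inl u) (.inl v) ↔ J.Adj u v := Iff.rfl

lemma auxGraph_adj_inl_inr {v : VJ} {p : Fin m × Fin 3} :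
    (auxGraph m J col).Adj (.inl v) (.inr p) ↔ p.2 = 2 ∧ col v ≠ p.1 := Iff.rfl

lemma auxGraph_adj_inr_inl {v : VJ} {p : Fin m × Fin 3} :
    (auxGraph m J col).Adj (.inr p) (.inl v) ↔ p.2 = 2 ∧ col v ≠ p.1 := Iff.rfl

lemma auxGraph_adj_inr_inr {p q : Fin m × Fin 3} :
    (auxGraph m J col).Adj (.inr p) (.inr q) ↔
      (p.1 = q.1 ∧ p.2 ≠ q.2) ∨ (p.1 ≠ q.1 ∧ p.2 = 2 ∧ q.2 = 2) := Iff.rfl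

end Construction

/-- For any graph `J` with `χ(J) ≥ 2` and any `m ≥ χ(J)`, there is a graph `G`
containing `J` as an induced subgraph with `dim_l(G) = m` and having a local metric
basis disjoint from `V(J)`. -/
theorem stmt_17 {VJ : Type} [Fintype VJ] (J : SimpleGraph VJ)
    (hχ : 2 ≤ J.chromaticNumber) (m : ℕ) (hm : J.chromaticNumber ≤ (m : ℕ∞)) :
    ∃ (VG : Type) (_ : Fintype VG) (G : SimpleGraph VG) (ι : VJ → VG),
      Function.Injective ι ∧
      (∀ a b : VJ, G.Adj (ι a) (ι b) ↔ J.Adj a b) ∧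
      localMetricDim G = m ∧
      ∃ B : Set VG, IsLocalMetricSet G B ∧ B.ncard = m ∧ ∀ a : VJ, ι a ∉ B := by
  classical
  have hm2 : 2 ≤ m := by
    have h := hχ.trans hm
    exact_mod_cast h
  have hcol : J.Colorable m := SimpleGraph.chromaticNumber_le_iff_colorable.mp hm
  obtain ⟨C⟩ := hcol
  set col : VJ → Fin m := fun v => C v with hcoldef
  have hcolprop : ∀ {u v : VJ}, J.Adj u v → col u ≠ col v := fun h => C.valid h
  set G := auxGraph m J col with hG
  -- notation for the added vertices
  let a : Fin m → VJ ⊕ (Fin m × Fin 3) := fun i => .inr (i, 0)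
  let b : Fin m → VJ ⊕ (Fin m × Fin 3) := fun i => .inr (i, 1)
  let c : Fin m → VJ ⊕ (Fin m × Fin 3) := fun i => .inr (i, 2)
  have hadj_ac : ∀ i, G.Adj (a i) (c i) := fun i =>
    auxGraph_adj_inr_inr.mpr (Or.inl ⟨rfl, by simp⟩)
  have hadj_cc : ∀ i j, i ≠ j → G.Adj (c i) (c j) := fun i j hij =>
    auxGraph_adj_inr_inr.mpr (Or.inr ⟨by simpa using hij, rfl, rfl⟩)
  have hadj_cv : ∀ i (v : VJ), col v ≠ i → G.Adj (c i) (.inl v) := fun i v h =>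
    auxGraph_adj_inr_inl.mpr ⟨rfl, h⟩
  -- neighbors of `a i` are exactly `(i, l)` with `l ≠ 0`
  have hnbr_a : ∀ i x, G.Adj (a i) x ↔ ∃ l : Fin 3, l ≠ 0 ∧ x = .inr (i, l) := by
    intro i x
    cases x with
    | inl v =>
      simp only [hG, auxGraph_adj_inr_inl]
      constructor
      · rintro ⟨h, -⟩; exact absurd h (by simp)
      · rintro ⟨l, -, h⟩; exact absurd h (by simp)
    | inr p =>
      obtain ⟨j, l⟩ := p
      simp only [hG, auxGraph_adj_inr_inr]
      constructor
      · rintro (⟨h1, h2⟩ | ⟨-, h2, -⟩)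
        · have h1' : i = j := h1
          have h2' : (0 : Fin 3) ≠ l := h2
          subst h1'
          exact ⟨l, fun hl => h2' hl.symm, rfl⟩
        · exact absurd h2 (by simp)
      · rintro ⟨l', hl', h⟩
        have h' : (j, l) = (i, l') := by simpa using h
        rw [Prod.mk.injEq] at h'
        refine Or.inl ⟨h'.1.symm, ?_⟩
        intro hh
        apply hl'
        have hh' : (0 : Fin 3) = l := hh
        rw [← h'.2]
        exact hh'.symm
  -- key distance facts
  have hdist_a_v_ne_one : ∀ i (v : VJ), G.dist (a i) (.inl v) ≠ 1 := by
    intro i v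
    apply dist_ne_one_of_not_adj
    rw [hnbr_a]
    rintro ⟨l, -, h⟩
    exact absurd h (by simp)
  have hdist_a_v_eq_two : ∀ i (v : VJ), col v ≠ i → G.dist (a i) (.inl v) = 2 := by
    intro i v hv
    refine dist_eq_two_of (by simp) ?_ (hadj_ac i) (hadj_cv i v hv)
    rw [hnbr_a]
    rintro ⟨l, -, h⟩
    exact absurd h (by simp)
  have hdist_a_v_ne_two : ∀ i (v : VJ), col v = i → G.dist (a i) (.inl v) ≠ 2 := by
    intro i v hv
    apply dist_ne_two_of
    intro w hw hwv
    rw [hnbr_a] at hw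
    obtain ⟨l, hl, rfl⟩ := hw
    rw [auxGraph_adj_inr_inl] at hwv
    exact hwv.2 hv
  have hdist_a_c : ∀ i j, i ≠ j → G.dist (a i) (c j) = 2 := by
    intro i j hij
    refine dist_eq_two_of (by simp [a, c]) ?_ (hadj_ac i) (hadj_cc i j hij)
    rw [auxGraph_adj_inr_inr]
    rintro (⟨h1, -⟩ | ⟨-, h2, -⟩)
    · exact hij h1
    · exact absurd h2 (by simp)
  have hdist_a_b_ne_two : ∀ i j, i ≠ j → G.dist (a i) (b j) ≠ 2 := by
    intro i j hij
    apply dist_ne_two_of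
    intro w hw hwb
    rw [hnbr_a] at hw
    obtain ⟨l, hl, rfl⟩ := hw
    rw [auxGraph_adj_inr_inr] at hwb
    rcases hwb with ⟨h1, h2⟩ | ⟨-, -, h3⟩
    · exact hij h1
    · exact absurd h3 (by simp)
  -- the basis
  set B : Set (VJ ⊕ (Fin m × Fin 3)) := Set.range a with hB
  have haB : ∀ i, a i ∈ B := fun i => ⟨i, rfl⟩
  have ha_inj : Function.Injective a := by
    intro i j h
    simpa [a] using h
  have hBncard : B.ncard = m := by
    rw [hB, ← Set.image_univ, Set.ncard_image_of_injective _ ha_inj, Set.ncard_univ,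
      Nat.card_eq_fintype_card, Fintype.card_fin]
  -- B is a local metric set
  have hBlocal : IsLocalMetricSet G B := by
    rintro (u | ⟨i, k⟩) (v | ⟨j, l⟩) hadj
    · -- J-edge
      have huv : J.Adj u v := hadj
      refine ⟨a (col u), haB _, ?_⟩
      rw [hdist_a_v_eq_two (col u) v (fun h => hcolprop huv h.symm)]
      exact hdist_a_v_ne_two (col u) u rfl
    · -- edge from J-vertex `u` to `(j, l)`; necessarily `l = 2`
      rw [auxGraph_adj_inl_inr] at hadj
      obtain ⟨rfl, hcu⟩ := hadj
      refine ⟨a j, haB _, ?_⟩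
      show G.dist (a j) (Sum.inl u) ≠ G.dist (a j) (c j)
      rw [SimpleGraph.dist_eq_one_iff_adj.mpr (hadj_ac j)]
      exact hdist_a_v_ne_one j u
    · -- symmetric case
      rw [auxGraph_adj_inr_inl] at hadj
      obtain ⟨hk2, hcv⟩ := hadj
      refine ⟨a i, haB _, ?_⟩
      have hk2' : k = 2 := hk2
      subst hk2'
      show G.dist (a i) (c i) ≠ G.dist (a i) (Sum.inl v)
      rw [SimpleGraph.dist_eq_one_iff_adj.mpr (hadj_ac i)]
      exact fun h => hdist_a_v_ne_one i v h.symm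
    · -- edge among the added vertices
      rw [auxGraph_adj_inr_inr] at hadj
      rcases hadj with ⟨rfl, hkl⟩ | ⟨hij, hk2, hl2⟩
      · -- same triangle
        by_cases hk : k = 0
        · subst hk
          refine ⟨a i, haB _, ?_⟩
          rw [SimpleGraph.dist_self]
          have : G.Adj (a i) (.inr (i, l)) :=
            auxGraph_adj_inr_inr.mpr (Or.inl ⟨rfl, hkl⟩)
          rw [SimpleGraph.dist_eq_one_iff_adj.mpr this]
          omega
        · by_cases hl : l = 0
          · subst hl
            refine ⟨a i, haB _, ?_⟩
            have : G.Adj (a i) (.inr (i, k)) :=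
              auxGraph_adj_inr_inr.mpr (Or.inl ⟨rfl, fun h => hk h.symm⟩)
            rw [SimpleGraph.dist_eq_one_iff_adj.mpr this, SimpleGraph.dist_self]
            omega
          · -- {k, l} = {1, 2}
            obtain ⟨j, hij⟩ : ∃ j : Fin m, j ≠ i := by
              rcases Nat.lt_or_ge i.val 1 with h | h
              · exact ⟨⟨1, by omega⟩, Fin.ne_of_val_ne (by simp only [Fin.val_mk]; omega)⟩
              · exact ⟨⟨0, by omega⟩, Fin.ne_of_val_ne (by simp only [Fin.val_mk]; omega)⟩
            refine ⟨a j, haB _, ?_⟩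
            have hk' : k = 1 ∨ k = 2 := by fin_cases k <;> simp_all
            have hl' : l = 1 ∨ l = 2 := by fin_cases l <;> simp_all
            rcases hk' with rfl | rfl <;> rcases hl' with rfl | rfl
            · exact absurd rfl hkl
            · show G.dist (a j) (b i) ≠ G.dist (a j) (c i)
              rw [hdist_a_c j i hij]
              exact hdist_a_b_ne_two j i hij
            · show G.dist (a j) (c i) ≠ G.dist (a j) (b i)
              rw [hdist_a_c j i hij]
              exact fun h => hdist_a_b_ne_two j i hij h.symm
            · exact absurd rfl hkl
      · -- different triangles: k = l = 2
        have hk2' : k = 2 := hk2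
        have hl2' : l = 2 := hl2
        subst hk2'; subst hl2'
        refine ⟨a i, haB _, ?_⟩
        show G.dist (a i) (c i) ≠ G.dist (a i) (c j)
        rw [SimpleGraph.dist_eq_one_iff_adj.mpr (hadj_ac i)]
        have hna : ¬ G.Adj (a i) (c j) := by
          rw [auxGraph_adj_inr_inr]
          rintro (⟨h1, -⟩ | ⟨-, h2, -⟩)
          · exact hij h1
          · exact absurd h2 (by simp)
        show (1 : ℕ) ≠ G.dist (a i) (c j)
        exact fun h => dist_ne_one_of_not_adj hna h.symm
  -- lower bound: every local metric set has at least m elements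
  have hlower : ∀ S : Set (VJ ⊕ (Fin m × Fin 3)), IsLocalMetricSet G S → m ≤ S.ncard := by
    intro S hS
    have hab : ∀ i, G.Adj (a i) (b i) := fun i =>
      auxGraph_adj_inr_inr.mpr (Or.inl ⟨rfl, by simp⟩)
    have htwin : ∀ i (x : VJ ⊕ (Fin m × Fin 3)), x ≠ a i → x ≠ b i →
        (G.Adj x (a i) ↔ G.Adj x (b i)) := by
      intro i x hxa hxb
      cases x with
      | inl v =>
        simp only [hG, a, b, auxGraph_adj_inl_inr]
        constructor
        · rintro ⟨h, -⟩; exact absurd h (by simp)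
        · rintro ⟨h, -⟩; exact absurd h (by simp)
      | inr p =>
        obtain ⟨j, l⟩ := p
        simp only [hG, a, b, auxGraph_adj_inr_inr]
        constructor
        · rintro (⟨rfl, h2⟩ | ⟨-, -, h3⟩)
          · refine Or.inl ⟨rfl, ?_⟩
            intro hl1
            exact hxb (by simp [b, hl1])
          · exact absurd h3 (by simp)
        · rintro (⟨rfl, h2⟩ | ⟨-, -, h3⟩)
          · refine Or.inl ⟨rfl, ?_⟩
            intro hl0
            exact hxa (by simp [a, hl0])
          · exact absurd h3 (by simp)
    have hchoice : ∀ i : Fin m, ∃ s ∈ S, s = a i ∨ s = b i := by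
      intro i
      obtain ⟨s, hsS, hsd⟩ := hS (a i) (b i) (hab i)
      refine ⟨s, hsS, ?_⟩
      by_contra h
      push_neg at h
      exact hsd (twin_dist_eq (hab i) (htwin i) h.1 h.2)
    choose f hfS hfab using hchoice
    have hf_inj : Function.Injective f := by
      intro i j hij
      rcases hfab i with h1 | h1 <;> rcases hfab j with h2 | h2 <;>
        rw [h1, h2] at hij <;> simp [a, b] at hij <;> exact hij
    calc m = (Set.range f).ncard := by
          rw [← Set.image_univ, Set.ncard_image_of_injective _ hf_inj, Set.ncard_univ,
            Nat.card_eq_fintype_card, Fintype.card_fin]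
      _ ≤ S.ncard := Set.ncard_le_ncard (Set.range_subset_iff.mpr hfS) (Set.toFinite S)
  -- conclusion
  refine ⟨VJ ⊕ (Fin m × Fin 3), inferInstance, G, Sum.inl, Sum.inl_injective, ?_, ?_, B,
    hBlocal, hBncard, ?_⟩
  · intro u v
    exact auxGraph_adj_inl_inl
  · apply le_antisymm
    · exact Nat.sInf_le ⟨B, hBncard, hBlocal⟩
    · refine le_csInf ⟨m, B, hBncard, hBlocal⟩ ?_
      rintro n ⟨S, rfl, hS⟩
      exact hlower S hS
  · rintro v ⟨i, h⟩
    exact absurd h (by simp [a])
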